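/- For the forward–backward algorithm with deviations, there exists x̄ ∈ zer(A + C) such that x_n converges weakly to x̄, i.e. ⟨x_n, w⟩ → ⟨x̄, w⟩ for every w ∈ H. -/

import Mathlib

open Filter
open scoped RealInnerProductSpace Pointwise Topology

noncomputable def mnorm {H : Type*} [NormedAddCommGroup H] [InnerProductSpace ℝ H]
    (M : H →L[ℝ] H) (w : H) : ℝ :=
  Real.sqrt ⟪w, M w⟫

section Helpers

lemma aux_sq_le {t a b : ℝ} (ht : 0 ≤ t) (ha : 0 ≤ a) (hb : 0 ≤ b) (h : t^2 ≤ a*t + b) :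
    t ≤ a + Real.sqrt b := by
  by_contra hlt
  push_neg at hlt
  have h1 : Real.sqrt b ^ 2 = b := Real.sq_sqrt hb
  have h2 : 0 ≤ Real.sqrt b := Real.sqrt_nonneg b
  have h3 : Real.sqrt b ≤ t := by nlinarith
  nlinarith [mul_le_mul_of_nonneg_left h3 h2]

lemma approx_tendsto {g : ℕ → ℝ}
    (h : ∀ ε > (0:ℝ), ∃ g' : ℕ → ℝ, (∃ r, Tendsto g' atTop (𝓝 r)) ∧ ∀ k, |g k - g' k| ≤ ε) :
    ∃ r, Tendsto g atTop (𝓝 r) := by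
  have hc : CauchySeq g := by
    rw [Metric.cauchySeq_iff]
    intro ε hε
    obtain ⟨g', ⟨r, hr⟩, hg'⟩ := h (ε/4) (by linarith)
    have hcs : CauchySeq g' := hr.cauchySeq
    rw [Metric.cauchySeq_iff] at hcs
    obtain ⟨N, hN⟩ := hcs (ε/4) (by linarith)
    refine ⟨N, fun m hm n hn => ?_⟩
    have h3 := hN m hm n hn
    have h1 := hg' m
    have h2 := hg' n
    rw [Real.dist_eq] at *
    have h5 : |g m - g n| ≤ |g m - g' m| + |g' m - g' n| + |g' n - g n| := by
      calc |g m - g n| = |(g m - g' m) + (g' m - g' n) + (g' n - g n)| := by ring_nf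
        _ ≤ |(g m - g' m) + (g' m - g' n)| + |g' n - g n| := abs_add_le _ _
        _ ≤ |g m - g' m| + |g' m - g' n| + |g' n - g n| := by
            have := abs_add_le (g m - g' m) (g' m - g' n); linarith
    have h4 : |g' n - g n| = |g n - g' n| := abs_sub_comm _ _
    linarith
  exact cauchySeq_tendsto_of_complete hc

lemma exists_weak_subseq {H : Type*} [NormedAddCommGroup H] [InnerProductSpace ℝ H]
    [CompleteSpace H] (x : ℕ → H) (B : ℝ) (hB : ∀ n, ‖x n‖ ≤ B) :
    ∃ φ : ℕ → ℕ, StrictMono φ ∧ ∃ xb : H,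
      ∀ w : H, Tendsto (fun k => ⟪x (φ k), w⟫) atTop (𝓝 ⟪xb, w⟫) := by
  have hB0 : 0 ≤ B := le_trans (norm_nonneg _) (hB 0)
  have hbound : ∀ n w, |⟪x n, w⟫| ≤ B * ‖w‖ := by
    intro n w
    exact le_trans (abs_real_inner_le_norm _ _)
      (mul_le_mul_of_nonneg_right (hB n) (norm_nonneg _))
  have hcomp : IsCompact (Set.univ.pi (fun m : ℕ => Set.Icc (-(B * ‖x m‖)) (B * ‖x m‖))) :=
    isCompact_univ_pi (fun m => isCompact_Icc)
  have hmem : ∀ n, (fun m => ⟪x n, x m⟫) ∈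
      (Set.univ.pi (fun m : ℕ => Set.Icc (-(B * ‖x m‖)) (B * ‖x m‖))) := by
    intro n
    rw [Set.mem_univ_pi]
    intro m
    exact ⟨(abs_le.mp (hbound n (x m))).1, (abs_le.mp (hbound n (x m))).2⟩
  obtain ⟨L, -, φ, hφ, hconv⟩ := hcomp.isSeqCompact hmem
  have hptws : ∀ m, Tendsto (fun k => ⟪x (φ k), x m⟫) atTop (𝓝 (L m)) := by
    intro m
    exact (tendsto_pi_nhds.mp hconv) m
  set S : Submodule ℝ H :=
    { carrier := {w | ∃ r : ℝ, Tendsto (fun k => ⟪x (φ k), w⟫) atTop (𝓝 r)}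
      add_mem' := by
        rintro a b ⟨ra, hra⟩ ⟨rb, hrb⟩
        exact ⟨ra + rb, by simpa [inner_add_right] using hra.add hrb⟩
      zero_mem' := ⟨0, by simpa using (tendsto_const_nhds : Tendsto (fun _ : ℕ => (0:ℝ)) _ _)⟩
      smul_mem' := by
        rintro t a ⟨ra, hra⟩
        exact ⟨t * ra, by simpa [inner_smul_right] using hra.const_mul t⟩ } with hSdef
  have hSmem : ∀ w : H, w ∈ S ↔ ∃ r : ℝ, Tendsto (fun k => ⟪x (φ k), w⟫) atTop (𝓝 r) := by
    intro w; rfl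
  have hSclosed : IsClosed (S : Set H) := by
    rw [← closure_subset_iff_isClosed]
    intro w hw
    rw [SetLike.mem_coe, hSmem]
    apply approx_tendsto
    intro ε hε
    obtain ⟨w', hw'S, hww'⟩ := Metric.mem_closure_iff.mp hw (ε / (B+1)) (by positivity)
    rw [SetLike.mem_coe, hSmem] at hw'S
    refine ⟨fun k => ⟪x (φ k), w'⟫, hw'S, fun k => ?_⟩
    have h1 : ⟪x (φ k), w⟫ - ⟪x (φ k), w'⟫ = ⟪x (φ k), w - w'⟫ := by
      rw [inner_sub_right]
    rw [h1]
    calc |⟪x (φ k), w - w'⟫| ≤ B * ‖w - w'‖ := hbound _ _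
      _ ≤ B * (ε / (B+1)) := by
          apply mul_le_mul_of_nonneg_left _ hB0
          rw [← dist_eq_norm]
          exact le_of_lt hww'
      _ ≤ ε := by
          rw [mul_div_assoc']
          rw [div_le_iff₀ (by linarith : (0:ℝ) < B + 1)]
          nlinarith
  have hx_mem : ∀ n, x n ∈ S := fun n => (hSmem _).mpr ⟨L n, hptws n⟩
  set K := (Submodule.span ℝ (Set.range x)).topologicalClosure with hKdef
  haveI : CompleteSpace K := (Submodule.isClosed_topologicalClosure _).completeSpace_coe
  have hKS : K ≤ S :=
    Submodule.topologicalClosure_minimal _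
      (Submodule.span_le.mpr (by rintro a ⟨n, rfl⟩; exact hx_mem n)) hSclosed
  have hxK : ∀ n, x n ∈ K :=
    fun n => (Submodule.span ℝ (Set.range x)).le_topologicalClosure
      (Submodule.subset_span ⟨n, rfl⟩)
  have htot : ∀ w : H, ∃ r : ℝ, Tendsto (fun k => ⟪x (φ k), w⟫) atTop (𝓝 r) := by
    intro w
    obtain ⟨a, haK, b, hbK, rfl⟩ := K.exists_add_mem_mem_orthogonal w
    have h1 : a ∈ S := hKS haK
    have h2 : b ∈ S := by
      rw [hSmem]
      refine ⟨0, ?_⟩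
      have hz : ∀ k, ⟪x (φ k), b⟫ = 0 := fun k =>
        (Submodule.mem_orthogonal K b).mp hbK (x (φ k)) (hxK (φ k))
      simpa [hz] using (tendsto_const_nhds : Tendsto (fun _ : ℕ => (0:ℝ)) _ _)
    exact (hSmem _).mp (S.add_mem h1 h2)
  choose r hr using htot
  have hr_bound : ∀ w, |r w| ≤ B * ‖w‖ := by
    intro w
    have h1 : Tendsto (fun k => |⟪x (φ k), w⟫|) atTop (𝓝 |r w|) := (hr w).abs
    exact le_of_tendsto h1 (Eventually.of_forall (fun k => hbound _ _))
  have hadd : ∀ a b : H, r (a + b) = r a + r b := by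
    intro a b
    exact tendsto_nhds_unique (hr (a+b)) (by simpa [inner_add_right] using (hr a).add (hr b))
  have hsmul : ∀ (t : ℝ) (a : H), r (t • a) = t * r a := by
    intro t a
    exact tendsto_nhds_unique (hr (t • a)) (by simpa [inner_smul_right] using (hr a).const_mul t)
  set f : H →ₗ[ℝ] ℝ :=
    { toFun := r, map_add' := hadd, map_smul' := hsmul } with hfdef
  set F : H →L[ℝ] ℝ := f.mkContinuous B (fun w => by
    have h := hr_bound w; rw [← Real.norm_eq_abs] at h; exact h) with hFdef
  refine ⟨φ, hφ, (InnerProductSpace.toDual ℝ H).symm F, fun w => ?_⟩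
  have h2 : ⟪(InnerProductSpace.toDual ℝ H).symm F, w⟫ = F w :=
    InnerProductSpace.toDual_symm_apply
  rw [h2]
  exact hr w

variable {H : Type*} [NormedAddCommGroup H] [InnerProductSpace ℝ H]

lemma inner_M_expand (M : H →L[ℝ] H) (hMsa : ∀ a b : H, ⟪M a, b⟫ = ⟪a, M b⟫)
    (d uu vv : H) (s t s' t' : ℝ) :
    ⟪d + s•uu + t•vv, M (d + s'•uu + t'•vv)⟫
      = ⟪d, M d⟫ + (s+s')*⟪d, M uu⟫ + (t+t')*⟪d, M vv⟫ + (s*s')*⟪uu, M uu⟫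
        + (s*t'+s'*t)*⟪uu, M vv⟫ + (t*t')*⟪vv, M vv⟫ := by
  have h1 : ⟪uu, M d⟫ = ⟪d, M uu⟫ := by rw [← hMsa d uu]; exact real_inner_comm _ _
  have h2 : ⟪vv, M d⟫ = ⟪d, M vv⟫ := by rw [← hMsa d vv]; exact real_inner_comm _ _
  have h3 : ⟪vv, M uu⟫ = ⟪uu, M vv⟫ := by rw [← hMsa uu vv]; exact real_inner_comm _ _
  simp only [map_add, map_smul, inner_add_left, inner_add_right, inner_smul_right,
    real_inner_smul_left, h1, h2, h3]
  ring

lemma inner_M_combo (M : H →L[ℝ] H) (hMsa : ∀ a b : H, ⟪M a, b⟫ = ⟪a, M b⟫)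
    {d uu vv a b' : H} {s t s' t' : ℝ}
    (ha : a = d + s•uu + t•vv) (hb : b' = d + s'•uu + t'•vv) :
    ⟪a, M b'⟫
      = ⟪d, M d⟫ + (s+s')*⟪d, M uu⟫ + (t+t')*⟪d, M vv⟫ + (s*s')*⟪uu, M uu⟫
        + (s*t'+s'*t)*⟪uu, M vv⟫ + (t*t')*⟪vv, M vv⟫ := by
  subst ha hb
  exact inner_M_expand M hMsa d uu vv s t s' t'

lemma quad_real (l g b dd du dv uu2 uv vv2 : ℝ)
    (hq : 2 - l*g*b ≠ 0) (hs : 4 - 2*l - g*b ≠ 0) :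
    l*g*b/2*(dd - 2*du + uu2)
      - 2*l*(dd - ((1-l)*g*b/(2-l*g*b))*du - dv)
      + l^2*(dd + ((1-l)*g*b/(2-l*g*b))^2*uu2 + vv2 - 2*((1-l)*g*b/(2-l*g*b))*du
          - 2*dv + 2*((1-l)*g*b/(2-l*g*b))*uv)
    = l*g*b/(2-l*g*b)*uu2 + l*(2-l*g*b)/(4-2*l-g*b)*vv2
      - l*(4-2*l-g*b)/2*(dd + (l*g*b/(2-l*g*b))^2*uu2 + (2*(1-l)/(4-2*l-g*b))^2*vv2
          + 2*(l*g*b/(2-l*g*b))*du - 2*(2*(1-l)/(4-2*l-g*b))*dv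
          - 2*(l*g*b/(2-l*g*b))*(2*(1-l)/(4-2*l-g*b))*uv) := by
  have hs' : 4 - l*2 - g*b ≠ 0 := by intro h; apply hs; linarith
  field_simp
  ring

end Helpers

set_option maxHeartbeats 4000000 in
theorem weak_convergence
    {H : Type*} [NormedAddCommGroup H] [InnerProductSpace ℝ H] [CompleteSpace H]
    (M : H →L[ℝ] H)
    (hMsa : ∀ a b : H, ⟪M a, b⟫ = ⟪a, M b⟫)
    (hMpos : ∃ c > (0:ℝ), ∀ a : H, ⟪a, M a⟫ ≥ c * ‖a‖ ^ 2)
    (Minv : H →L[ℝ] H)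
    (hMinv₁ : ∀ a : H, Minv (M a) = a)
    (hMinv₂ : ∀ a : H, M (Minv a) = a)
    (β : ℝ) (hβ : 0 < β)
    (A : H → Set H)
    (hAmono : ∀ a b ua vb : H, ua ∈ A a → vb ∈ A b → ⟪ua - vb, a - b⟫ ≥ 0)
    (hAmax : ∀ a ua : H, (∀ b vb : H, vb ∈ A b → ⟪ua - vb, a - b⟫ ≥ 0) → ua ∈ A a)
    (C : H → H)
    (hC : ∀ a b : H, ⟪C a - C b, a - b⟫ ≥ (1 / β) * mnorm Minv (C a - C b) ^ 2)
    (hzer : ∃ w : H, -C w ∈ A w)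
    (ε : ℝ) (hε0 : 0 < ε) (hε1 : ε < min 1 (4 / (3 + β)))
    (ζ γ lam : ℕ → ℝ)
    (hζ : ∀ n, 0 ≤ ζ n ∧ ζ n ≤ 1 - ε)
    (hγ : ∀ n, ε ≤ γ n ∧ γ n ≤ (4 - 3 * ε) / β)
    (hlam : ∀ n, ε ≤ lam n ∧ lam n ≤ 2 - γ n * β / 2 - ε / 2)
    (x u v p y z : ℕ → H) (ℓsq : ℕ → ℝ)
    (hu0 : u 0 = 0) (hv0 : v 0 = 0)
    (hy : ∀ n, y n = x n + u n)
    (hz : ∀ n, z n = x n + (((1 - lam n) * γ n * β) / (2 - lam n * γ n * β)) • u n + v n)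
    (hp : ∀ n, M (z n) - M (p n) - γ n • C (y n) ∈ γ n • A (p n))
    (hx : ∀ n, x (n + 1) = x n + lam n • (p n - z n))
    (hℓ : ∀ n, ℓsq n = (lam n * (4 - 2 * lam n - γ n * β) / 2) *
      mnorm M (p n - x n + ((lam n * γ n * β) / (2 - lam n * γ n * β)) • u n
        - ((2 * (1 - lam n)) / (4 - 2 * lam n - γ n * β)) • v n) ^ 2)
    (hdev : ∀ n, (lam (n+1) * γ (n+1) * β / (2 - lam (n+1) * γ (n+1) * β)) * mnorm M (u (n+1)) ^ 2
        + (lam (n+1) * (2 - lam (n+1) * γ (n+1) * β) / (4 - 2 * lam (n+1) - γ (n+1) * β)) * mnorm M (v (n+1)) ^ 2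
        ≤ ζ n * ℓsq n)
    :
    ∃ xb : H, -C xb ∈ A xb ∧
      ∀ w : H, Tendsto (fun n => ⟪x n, w⟫) atTop (𝓝 ⟪xb, w⟫) := by
  obtain ⟨c, hc0, hcpos⟩ := hMpos
  obtain ⟨xs, hxs⟩ := hzer
  -- ## basic facts about the M-geometry
  have hnn : ∀ a : H, 0 ≤ ⟪a, M a⟫ := fun a => le_trans (by positivity) (hcpos a)
  have hmsq : ∀ a : H, mnorm M a ^ 2 = ⟪a, M a⟫ := fun a => Real.sq_sqrt (hnn a)
  have hmnn : ∀ a : H, 0 ≤ mnorm M a := fun a => Real.sqrt_nonneg _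
  have hinv_eq : ∀ a : H, ⟪a, Minv a⟫ = ⟪Minv a, M (Minv a)⟫ := by
    intro a
    rw [← hMsa (Minv a) (Minv a), hMinv₂ a]
  have hinv_nn : ∀ a : H, 0 ≤ ⟪a, Minv a⟫ := fun a => (hinv_eq a) ▸ hnn (Minv a)
  have hmsq' : ∀ a : H, mnorm Minv a ^ 2 = ⟪a, Minv a⟫ := fun a => Real.sq_sqrt (hinv_nn a)
  have hzero_of : ∀ a : H, ⟪a, M a⟫ ≤ 0 → a = 0 := by
    intro a ha
    have := hcpos a
    have h2 : ‖a‖ ^ 2 ≤ 0 := by nlinarith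
    have : ‖a‖ = 0 := by nlinarith [norm_nonneg a, sq_nonneg (‖a‖)]
    exact norm_eq_zero.mp this
  have hsymM : ∀ a b : H, ⟪a, M b⟫ = ⟪b, M a⟫ := by
    intro a b
    rw [← hMsa a b]
    exact real_inner_comm _ _
  have hCS : ∀ a b : H, |⟪a, M b⟫| ≤ mnorm M a * mnorm M b := by
    intro a b
    have key : ⟪a, M b⟫^2 ≤ ⟪a, M a⟫ * ⟪b, M b⟫ := by
      by_cases hbb : ⟪b, M b⟫ = 0
      · have hb0 : b = 0 := hzero_of b (le_of_eq hbb)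
        subst hb0
        simp
      · have hbb' : 0 < ⟪b, M b⟫ := lt_of_le_of_ne (hnn b) (Ne.symm hbb)
        have h0 := hnn (⟪b, M b⟫ • a - ⟪a, M b⟫ • b)
        have hE : ⟪⟪b, M b⟫ • a - ⟪a, M b⟫ • b, M (⟪b, M b⟫ • a - ⟪a, M b⟫ • b)⟫
            = ⟪b, M b⟫*(⟪a, M a⟫*⟪b, M b⟫ - ⟪a, M b⟫^2) := by
          simp only [map_sub, map_smul, inner_sub_left, inner_sub_right, inner_smul_right,
            real_inner_smul_left]
          rw [hsymM b a]
          ring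
        rw [hE] at h0
        nlinarith [h0, hbb']
    calc |⟪a, M b⟫| = Real.sqrt (⟪a, M b⟫^2) := (Real.sqrt_sq_eq_abs _).symm
      _ ≤ Real.sqrt (⟪a, M a⟫ * ⟪b, M b⟫) := Real.sqrt_le_sqrt key
      _ = mnorm M a * mnorm M b := by rw [Real.sqrt_mul (hnn a)]; rfl
  have hmM_inv : ∀ a : H, mnorm M (Minv a) = mnorm Minv a := by
    intro a
    unfold mnorm
    rw [hinv_eq a]
  have hcross : ∀ a e : H, |⟪a, e⟫| ≤ mnorm Minv a * mnorm M e := by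
    intro a e
    have h1 : ⟪a, e⟫ = ⟪Minv a, M e⟫ := by
      conv_lhs => rw [← hMinv₂ a, hMsa]
    rw [h1, ← hmM_inv]
    exact hCS (Minv a) e
  have htri : ∀ a b : H, mnorm M (a + b) ≤ mnorm M a + mnorm M b := by
    intro a b
    have hexp : ⟪a + b, M (a + b)⟫ = ⟪a, M a⟫ + 2*⟪a, M b⟫ + ⟪b, M b⟫ := by
      simp only [map_add, inner_add_left, inner_add_right]
      rw [hsymM b a]
      ring
    have h1 : ⟪a + b, M (a + b)⟫ ≤ (mnorm M a + mnorm M b)^2 := by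
      have h2 := (abs_le.mp (hCS a b)).2
      rw [hexp]
      nlinarith [hmsq a, hmsq b]
    calc mnorm M (a+b) = Real.sqrt ⟪a+b, M (a+b)⟫ := rfl
      _ ≤ Real.sqrt ((mnorm M a + mnorm M b)^2) := Real.sqrt_le_sqrt h1
      _ = |mnorm M a + mnorm M b| := Real.sqrt_sq_eq_abs _
      _ = mnorm M a + mnorm M b := abs_of_nonneg (add_nonneg (hmnn a) (hmnn b))
  have hmsmul : ∀ (s : ℝ) (a : H), mnorm M (s • a) = |s| * mnorm M a := by
    intro s a
    unfold mnorm
    have h1 : ⟪s•a, M (s•a)⟫ = s^2 * ⟪a, M a⟫ := by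
      rw [map_smul, real_inner_smul_left, inner_smul_right]
      ring
    rw [h1, Real.sqrt_mul (sq_nonneg s), Real.sqrt_sq_eq_abs]
  have hmneg : ∀ a : H, mnorm M (-a) = mnorm M a := by
    intro a
    have := hmsmul (-1) a
    simpa using this
  have hnorm_le : ∀ a : H, ‖a‖ ≤ mnorm M a / Real.sqrt c := by
    intro a
    have h2 : (Real.sqrt c * ‖a‖)^2 ≤ mnorm M a ^ 2 := by
      rw [hmsq, mul_pow, Real.sq_sqrt (le_of_lt hc0)]
      exact hcpos a
    have h3 := Real.sqrt_le_sqrt h2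
    rw [Real.sqrt_sq (mul_nonneg (Real.sqrt_nonneg c) (norm_nonneg a)),
      Real.sqrt_sq (hmnn a)] at h3
    rw [le_div_iff₀ (Real.sqrt_pos.mpr hc0)]
    linarith [h3]
  have hnormInv_le : ∀ a : H, ‖a‖ ≤ ((‖M‖+1) / Real.sqrt c) * mnorm Minv a := by
    intro a
    have h1 : ‖a‖ ≤ (‖M‖+1) * ‖Minv a‖ := by
      calc ‖a‖ = ‖M (Minv a)‖ := by rw [hMinv₂]
        _ ≤ ‖M‖ * ‖Minv a‖ := M.le_opNorm _
        _ ≤ (‖M‖+1) * ‖Minv a‖ := by nlinarith [norm_nonneg (Minv a)]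
    have h2 : ‖Minv a‖ ≤ mnorm M (Minv a) / Real.sqrt c := hnorm_le (Minv a)
    rw [hmM_inv] at h2
    have h3 := mul_le_mul_of_nonneg_left h2 (by positivity : (0:ℝ) ≤ ‖M‖+1)
    calc ‖a‖ ≤ (‖M‖+1) * ‖Minv a‖ := h1
      _ ≤ (‖M‖+1) * (mnorm Minv a / Real.sqrt c) := h3
      _ = ((‖M‖+1) / Real.sqrt c) * mnorm Minv a := by ring
  -- ## numeric bounds
  have hε1' : ε < 1 := lt_of_lt_of_le hε1 (min_le_left _ _)
  have hgb : ∀ n, ε * β ≤ γ n * β ∧ γ n * β ≤ 4 - 3*ε := by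
    intro n
    constructor
    · exact mul_le_mul_of_nonneg_right (hγ n).1 (le_of_lt hβ)
    · have := (hγ n).2
      calc γ n * β ≤ ((4 - 3*ε)/β) * β := mul_le_mul_of_nonneg_right this (le_of_lt hβ)
        _ = 4 - 3*ε := by field_simp
  have hSn : ∀ n, ε ≤ 4 - 2*lam n - γ n * β := by
    intro n
    have := (hlam n).2
    linarith
  have hQn : ∀ n, ε^2*β/2 ≤ 2 - lam n * γ n * β := by
    intro n
    have h1 := (hlam n).1
    have h2 := (hlam n).2
    have h3 := (hgb n).1
    have h4 := (hgb n).2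
    nlinarith [sq_nonneg (γ n * β - 2), mul_le_mul_of_nonneg_right h2 (le_of_lt (lt_of_lt_of_le (by positivity) h3 : (0:ℝ) < γ n * β))]
  have hQpos : ∀ n, 0 < 2 - lam n * γ n * β := fun n =>
    lt_of_lt_of_le (by positivity) (hQn n)
  have hSpos : ∀ n, 0 < 4 - 2*lam n - γ n * β := fun n =>
    lt_of_lt_of_le hε0 (hSn n)
  have hlam2 : ∀ n, lam n ≤ 2 := by
    intro n
    have := (hlam n).2
    have := (hgb n).1
    nlinarith
  have hlampos : ∀ n, 0 < lam n := fun n => lt_of_lt_of_le hε0 (hlam n).1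
  have hγpos : ∀ n, 0 < γ n := fun n => lt_of_lt_of_le hε0 (hγ n).1
  have hlgb2 : ∀ n, lam n * γ n * β ≤ 2 := by
    intro n
    have := hQn n
    have : (0:ℝ) ≤ ε^2*β/2 := by positivity
    linarith [hQn n]
  have hlgb0 : ∀ n, 0 ≤ lam n * γ n * β := by
    intro n
    have := hlampos n; have := hγpos n
    positivity
  -- bcoef bounds
  have hbc_lb : ∀ n, ε^2*β/2 ≤ lam n * γ n * β / (2 - lam n * γ n * β) := by
    intro n
    rw [le_div_iff₀ (hQpos n)]
    have k1 : ε*(ε*β) ≤ lam n * (γ n * β) :=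
      mul_le_mul (hlam n).1 (hgb n).1 (by positivity) (le_of_lt (hlampos n))
    nlinarith [k1, hlgb0 n, mul_nonneg (le_of_lt (show (0:ℝ) < ε^2*β/2 by positivity)) (hlgb0 n)]
  have hbc_ub : ∀ n, lam n * γ n * β / (2 - lam n * γ n * β) ≤ 4/(ε^2*β) := by
    intro n
    rw [div_le_div_iff₀ (hQpos n) (by positivity : (0:ℝ) < ε^2*β)]
    nlinarith [hQn n, hlgb2 n,
      mul_le_mul_of_nonneg_right (hlgb2 n) (show (0:ℝ) ≤ ε^2*β by positivity)]
  have hbc_nn : ∀ n, 0 ≤ lam n * γ n * β / (2 - lam n * γ n * β) := fun n =>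
    div_nonneg (hlgb0 n) (le_of_lt (hQpos n))
  have hhc_lb : ∀ n, ε^3*β/8 ≤ lam n * (2 - lam n * γ n * β) / (4 - 2*lam n - γ n * β) := by
    intro n
    rw [le_div_iff₀ (hSpos n)]
    have k1 : ε*(ε^2*β/2) ≤ lam n * (2 - lam n * γ n * β) :=
      mul_le_mul (hlam n).1 (hQn n) (by positivity) (le_of_lt (hlampos n))
    have hS4 : 4 - 2*lam n - γ n * β ≤ 4 := by nlinarith [hlampos n, hγpos n, hβ]
    nlinarith [k1, hS4, hSpos n, show (0:ℝ) ≤ ε^3*β/8 by positivity]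
  have hhc_nn : ∀ n, 0 ≤ lam n * (2 - lam n * γ n * β) / (4 - 2*lam n - γ n * β) := by
    intro n
    have h1 := hlampos n; have h2 := hQpos n; have h3 := hSpos n
    positivity
  have hls_lb : ∀ n, ε^2/2 ≤ lam n * (4 - 2*lam n - γ n * β) / 2 := by
    intro n
    have h1 := (hlam n).1
    have h2 := hSn n
    nlinarith
  have hhc_ub : ∀ n, lam n * (2 - lam n * γ n * β) / (4 - 2*lam n - γ n * β) ≤ 4/ε := by
    intro n
    rw [div_le_div_iff₀ (hSpos n) hε0]
    have k1 : lam n * (2 - lam n * γ n * β) ≤ 4 := by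
      nlinarith [hlam2 n, hQpos n, hlampos n, hlgb0 n]
    nlinarith [k1, hSn n, mul_le_mul_of_nonneg_right k1 (le_of_lt hε0)]
  have hcc_abs : ∀ n, |2*(1 - lam n)/(4 - 2*lam n - γ n * β)| ≤ 2/ε := by
    intro n
    rw [abs_div, abs_of_pos (hSpos n), div_le_div_iff₀ (hSpos n) hε0]
    have k1 : |1 - lam n| ≤ 1 := abs_le.mpr ⟨by linarith [hlam2 n], by linarith [hlampos n]⟩
    have k2 : |2*(1 - lam n)| = 2*|1 - lam n| := by rw [abs_mul]; norm_num
    have k4 := mul_le_mul_of_nonneg_right k1 (le_of_lt hε0)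
    have k5 := hSn n
    rw [k2]
    nlinarith [k4, k5]
  have hac_abs : ∀ n, |(1 - lam n) * γ n * β/(2 - lam n * γ n * β)| ≤ 8/(ε^2*β) := by
    intro n
    rw [abs_div, abs_of_pos (hQpos n), div_le_div_iff₀ (hQpos n) (by positivity : (0:ℝ) < ε^2*β)]
    have k1 : |1 - lam n| ≤ 1 := abs_le.mpr ⟨by linarith [hlam2 n], by linarith [hlampos n]⟩
    have k2 : |(1 - lam n) * γ n * β| = |1 - lam n| * (γ n * β) := by
      rw [abs_mul, abs_mul, abs_of_pos (hγpos n), abs_of_pos hβ, mul_assoc]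
    have k3 : |(1 - lam n) * γ n * β| ≤ 4 := by
      rw [k2]
      have k6 : γ n * β ≤ 4 := by linarith [(hgb n).2, hε0]
      have k7 := mul_le_mul k1 k6 (mul_nonneg (le_of_lt (hγpos n)) (le_of_lt hβ)) (by norm_num : (0:ℝ) ≤ 1)
      linarith [k7]
    have k8 := mul_le_mul_of_nonneg_right k3 (show (0:ℝ) ≤ ε^2*β by positivity)
    nlinarith [k8, hQn n]
  -- ## residual
  have hres : ∀ n, (γ n)⁻¹ • (M (z n) - M (p n)) - C (y n) ∈ A (p n) := by
    intro n
    obtain ⟨w, hw, hww⟩ := Set.mem_smul_set.mp (hp n)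
    have hγ0 : γ n ≠ 0 := ne_of_gt (hγpos n)
    have h1 : w = (γ n)⁻¹ • (M (z n) - M (p n) - γ n • C (y n)) := by
      rw [← hww, inv_smul_smul₀ hγ0]
    have h2 : (γ n)⁻¹ • (M (z n) - M (p n)) - C (y n)
        = (γ n)⁻¹ • (M (z n) - M (p n) - γ n • C (y n)) := by
      simp [smul_sub, smul_smul, inv_mul_cancel₀ hγ0]
    rw [h2, ← h1]
    exact hw
  -- ## key monotonicity inequality
  have hKEY : ∀ (q : H), -C q ∈ A q → ∀ n,
      (1/β) * mnorm Minv (C (y n) - C q) ^ 2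
        - mnorm Minv (C (y n) - C q) * mnorm M (p n - y n)
      ≤ (γ n)⁻¹ * ⟪z n - p n, M (p n - q)⟫ := by
    intro q hq n
    have hmono := hAmono (p n) q ((γ n)⁻¹ • (M (z n) - M (p n)) - C (y n)) (-C q) (hres n) hq
    have h1 : (γ n)⁻¹ • (M (z n) - M (p n)) - C (y n) - -C q
        = (γ n)⁻¹ • (M (z n) - M (p n)) - (C (y n) - C q) := by abel
    rw [h1, inner_sub_left] at hmono
    have h2 : ⟪(γ n)⁻¹ • (M (z n) - M (p n)), p n - q⟫
        = (γ n)⁻¹ * ⟪z n - p n, M (p n - q)⟫ := by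
      rw [real_inner_smul_left]
      congr 1
      rw [← map_sub, hMsa]
    rw [h2] at hmono
    have h3 : ⟪C (y n) - C q, p n - q⟫
        = ⟪C (y n) - C q, y n - q⟫ + ⟪C (y n) - C q, p n - y n⟫ := by
      rw [← inner_add_right]
      congr 1
      abel
    rw [h3] at hmono
    have h4 := hC (y n) q
    have h5 := hcross (C (y n) - C q) (p n - y n)
    have h6 : -(mnorm Minv (C (y n) - C q) * mnorm M (p n - y n))
        ≤ ⟪C (y n) - C q, p n - y n⟫ := by
      have := neg_abs_le ⟪C (y n) - C q, p n - y n⟫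
      linarith [h5]
    linarith [hmono, h4, h6]
  have hSTAR : ∀ (q : H), -C q ∈ A q → ∀ n,
      ⟪p n - z n, M (p n - q)⟫ ≤ γ n * β / 4 * ⟪p n - y n, M (p n - y n)⟫ := by
    intro q hq n
    have hk := hKEY q hq n
    have htn : 0 ≤ mnorm Minv (C (y n) - C q) := Real.sqrt_nonneg _
    have hm2 : mnorm M (p n - y n)^2 = ⟪p n - y n, M (p n - y n)⟫ := hmsq _
    have hmn : 0 ≤ mnorm M (p n - y n) := hmnn _
    have key2 : -(β/4) * ⟪p n - y n, M (p n - y n)⟫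
        ≤ (γ n)⁻¹ * ⟪z n - p n, M (p n - q)⟫ := by
      have h7 : (1/β)*mnorm Minv (C (y n) - C q)^2
          - mnorm Minv (C (y n) - C q) * mnorm M (p n - y n)
          ≥ -(β/4) * mnorm M (p n - y n)^2 := by
        have hqid : (1/β)*mnorm Minv (C (y n) - C q)^2
            - mnorm Minv (C (y n) - C q) * mnorm M (p n - y n)
            + (β/4)*mnorm M (p n - y n)^2
            = (1/(4*β))*(2*mnorm Minv (C (y n) - C q) - β*mnorm M (p n - y n))^2 := by
          field_simp
          ring
        have hnn2 : 0 ≤ (1/(4*β))*(2*mnorm Minv (C (y n) - C q)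
            - β*mnorm M (p n - y n))^2 :=
          mul_nonneg (le_of_lt (show (0:ℝ) < 1/(4*β) by positivity)) (sq_nonneg _)
        linarith [hqid, hnn2]
      rw [hm2] at h7
      linarith [hk, h7]
    have hneg : ⟪z n - p n, M (p n - q)⟫ = -⟪p n - z n, M (p n - q)⟫ := by
      rw [show z n - p n = -(p n - z n) by abel, inner_neg_left]
    rw [hneg, inv_mul_eq_div] at key2
    have hγp := hγpos n
    have h8 := (le_div_iff₀ hγp).mp key2
    nlinarith [h8]
  -- ## Fejér inequality
  have hFej : ∀ (q : H), -C q ∈ A q → ∀ n,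
      ⟪x (n+1) - q, M (x (n+1) - q)⟫ + ℓsq n
        ≤ ⟪x n - q, M (x n - q)⟫
          + (lam n * γ n * β / (2 - lam n * γ n * β)) * ⟪u n, M (u n)⟫
          + (lam n * (2 - lam n * γ n * β) / (4 - 2 * lam n - γ n * β)) * ⟪v n, M (v n)⟫ := by
    intro q hq n
    have hQ0 : (2 - lam n * γ n * β) ≠ 0 := ne_of_gt (hQpos n)
    have hS0 : (4 - 2*lam n - γ n * β) ≠ 0 := ne_of_gt (hSpos n)
    -- vector decompositions
    have hv1 : p n - y n = (p n - x n) + (-1:ℝ)•u n + (0:ℝ)•v n := by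
      rw [hy n]; module
    have hv2 : p n - z n = (p n - x n)
        + (-((1 - lam n) * γ n * β / (2 - lam n * γ n * β)))•u n + (-1:ℝ)•v n := by
      rw [hz n]; module
    have hv3 : p n - x n = (p n - x n) + (0:ℝ)•u n + (0:ℝ)•v n := by module
    have hv4 : p n - x n + (lam n * γ n * β / (2 - lam n * γ n * β)) • u n
        - (2 * (1 - lam n) / (4 - 2 * lam n - γ n * β)) • v n
        = (p n - x n) + (lam n * γ n * β / (2 - lam n * γ n * β))•u n
          + (-(2 * (1 - lam n) / (4 - 2 * lam n - γ n * β)))•v n := by module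
    have hvx : x (n+1) - q = (x n - q) + (lam n)•(p n - z n) + (0:ℝ)•(v n) := by
      rw [hx n]; module
    -- expansions
    have P1 : ⟪x (n+1) - q, M (x (n+1) - q)⟫
        = ⟪x n - q, M (x n - q)⟫ + 2*lam n*⟪x n - q, M (p n - z n)⟫
          + (lam n)^2*⟪p n - z n, M (p n - z n)⟫ := by
      rw [inner_M_combo M hMsa hvx hvx]
      ring
    have hxq : x n - q = (p n - q) - (p n - x n) := by abel
    have P2 : ⟪x n - q, M (p n - z n)⟫
        = ⟪p n - z n, M (p n - q)⟫ - ⟪p n - z n, M (p n - x n)⟫ := by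
      rw [hsymM (x n - q) (p n - z n), hxq, map_sub, inner_sub_right]
    have E1 : ⟪p n - y n, M (p n - y n)⟫
        = ⟪p n - x n, M (p n - x n)⟫ - 2*⟪p n - x n, M (u n)⟫ + ⟪u n, M (u n)⟫ := by
      rw [inner_M_combo M hMsa hv1 hv1]
      ring
    have E2 : ⟪p n - z n, M (p n - x n)⟫
        = ⟪p n - x n, M (p n - x n)⟫
          - ((1 - lam n) * γ n * β / (2 - lam n * γ n * β))*⟪p n - x n, M (u n)⟫
          - ⟪p n - x n, M (v n)⟫ := by
      rw [inner_M_combo M hMsa hv2 hv3]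
      ring
    have E3 : ⟪p n - z n, M (p n - z n)⟫
        = ⟪p n - x n, M (p n - x n)⟫
          + ((1 - lam n) * γ n * β / (2 - lam n * γ n * β))^2*⟪u n, M (u n)⟫
          + ⟪v n, M (v n)⟫
          - 2*((1 - lam n) * γ n * β / (2 - lam n * γ n * β))*⟪p n - x n, M (u n)⟫
          - 2*⟪p n - x n, M (v n)⟫
          + 2*((1 - lam n) * γ n * β / (2 - lam n * γ n * β))*⟪u n, M (v n)⟫ := by
      rw [inner_M_combo M hMsa hv2 hv2]
      ring
    have E4 : ⟪p n - x n + (lam n * γ n * β / (2 - lam n * γ n * β)) • u n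
          - (2 * (1 - lam n) / (4 - 2 * lam n - γ n * β)) • v n,
        M (p n - x n + (lam n * γ n * β / (2 - lam n * γ n * β)) • u n
          - (2 * (1 - lam n) / (4 - 2 * lam n - γ n * β)) • v n)⟫
        = ⟪p n - x n, M (p n - x n)⟫
          + (lam n * γ n * β / (2 - lam n * γ n * β))^2*⟪u n, M (u n)⟫
          + (2*(1 - lam n)/(4 - 2*lam n - γ n * β))^2*⟪v n, M (v n)⟫
          + 2*(lam n * γ n * β / (2 - lam n * γ n * β))*⟪p n - x n, M (u n)⟫
          - 2*(2*(1 - lam n)/(4 - 2*lam n - γ n * β))*⟪p n - x n, M (v n)⟫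
          - 2*(lam n * γ n * β / (2 - lam n * γ n * β))
              *(2*(1 - lam n)/(4 - 2*lam n - γ n * β))*⟪u n, M (v n)⟫ := by
      rw [inner_M_combo M hMsa hv4 hv4]
      ring
    have hid := quad_real (lam n) (γ n) β
      ⟪p n - x n, M (p n - x n)⟫ ⟪p n - x n, M (u n)⟫ ⟪p n - x n, M (v n)⟫
      ⟪u n, M (u n)⟫ ⟪u n, M (v n)⟫ ⟪v n, M (v n)⟫ hQ0 hS0
    have hℓn : ℓsq n = lam n * (4 - 2*lam n - γ n * β)/2
        * ⟪p n - x n + (lam n * γ n * β / (2 - lam n * γ n * β)) • u n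
          - (2 * (1 - lam n) / (4 - 2 * lam n - γ n * β)) • v n,
        M (p n - x n + (lam n * γ n * β / (2 - lam n * γ n * β)) • u n
          - (2 * (1 - lam n) / (4 - 2 * lam n - γ n * β)) • v n)⟫ := by
      rw [hℓ n, hmsq]
    have hSTAR' := hSTAR q hq n
    have hmul := mul_le_mul_of_nonneg_left hSTAR'
      (by linarith [hlampos n] : (0:ℝ) ≤ 2*lam n)
    rw [P1, hℓn, E4, P2, E2, E3]
    rw [E1] at hmul
    nlinarith [hmul, hid]
  have hℓnn : ∀ n, 0 ≤ ℓsq n := by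
    intro n
    rw [hℓ n]
    exact mul_nonneg (le_trans (by positivity) (hls_lb n)) (sq_nonneg _)
  -- weight sequence
  set W : ℕ → ℝ := fun n => lam n * γ n * β / (2 - lam n * γ n * β) * ⟪u n, M (u n)⟫
    + lam n * (2 - lam n * γ n * β) / (4 - 2 * lam n - γ n * β) * ⟪v n, M (v n)⟫ with hW
  have hWnn : ∀ n, 0 ≤ W n := fun n =>
    add_nonneg (mul_nonneg (hbc_nn n) (hnn _)) (mul_nonneg (hhc_nn n) (hnn _))
  have hW0 : W 0 = 0 := by
    simp only [hW, hu0, hv0, inner_zero_left, map_zero, inner_zero_right, mul_zero, add_zero]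
  have hWdevn : ∀ n, W (n+1) ≤ ζ n * ℓsq n := by
    intro n
    have h := hdev n
    rw [hmsq, hmsq] at h
    exact h
  have hζ1 : ∀ n, ζ n ≤ 1 := fun n => by linarith [(hζ n).2, hε0]
  have hVstep : ∀ q, -C q ∈ A q → ∀ n,
      (⟪x (n+1) - q, M (x (n+1) - q)⟫ + W (n+1)) + ε * ℓsq n
        ≤ ⟪x n - q, M (x n - q)⟫ + W n := by
    intro q hq n
    have h1 := hFej q hq n
    have h2 := hWdevn n
    have h3 := mul_le_mul_of_nonneg_right (hζ n).2 (hℓnn n)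
    simp only [hW] at h2 ⊢
    linarith [h1, h2, h3]
  have hVanti : ∀ q, -C q ∈ A q → ∀ n,
      ⟪x (n+1) - q, M (x (n+1) - q)⟫ + W (n+1) ≤ ⟪x n - q, M (x n - q)⟫ + W n := by
    intro q hq n
    have := hVstep q hq n
    nlinarith [mul_nonneg (le_of_lt hε0) (hℓnn n)]
  have hVtend : ∀ q, -C q ∈ A q →
      ∃ Lq, Tendsto (fun n => ⟪x n - q, M (x n - q)⟫ + W n) atTop (𝓝 Lq) := by
    intro q hq
    refine ⟨_, tendsto_atTop_ciInf (antitone_nat_of_succ_le (hVanti q hq)) ⟨0, ?_⟩⟩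
    rintro r ⟨n, rfl⟩
    exact add_nonneg (hnn _) (hWnn n)
  have hℓ0 : Tendsto ℓsq atTop (𝓝 0) := by
    obtain ⟨L0, hL0⟩ := hVtend xs hxs
    have hdiffT : Tendsto (fun n => ((⟪x n - xs, M (x n - xs)⟫ + W n)
        - (⟪x (n+1) - xs, M (x (n+1) - xs)⟫ + W (n+1))) / ε) atTop (𝓝 0) := by
      have h2 := (hL0.sub (hL0.comp (tendsto_add_atTop_nat 1))).div_const ε
      simpa [Function.comp] using h2
    apply squeeze_zero hℓnn _ hdiffT
    intro n
    rw [le_div_iff₀ hε0]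
    linarith [hVstep xs hxs n]
  have hε2β : (0:ℝ) < ε^2*β/2 := by positivity
  have hε3β : (0:ℝ) < ε^3*β/8 := by positivity
  have huu2 : Tendsto (fun n => ⟪u n, M (u n)⟫) atTop (𝓝 0) := by
    rw [← tendsto_add_atTop_iff_nat 1]
    apply squeeze_zero (fun n => hnn _) _ (by simpa using hℓ0.div_const (ε^2*β/2))
    intro n
    have h4 : ε^2*β/2 * ⟪u (n+1), M (u (n+1))⟫ ≤ W (n+1) := by
      have h5 := mul_le_mul_of_nonneg_right (hbc_lb (n+1)) (hnn (u (n+1)))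
      have h6 := mul_nonneg (hhc_nn (n+1)) (hnn (v (n+1)))
      simp only [hW]
      linarith
    have h7 : W (n+1) ≤ ℓsq n :=
      le_trans (hWdevn n) (mul_le_of_le_one_left (hℓnn n) (hζ1 n))
    rw [le_div_iff₀ hε2β]
    calc ⟪u (n+1), M (u (n+1))⟫ * (ε^2*β/2) = ε^2*β/2 * ⟪u (n+1), M (u (n+1))⟫ := by ring
      _ ≤ W (n+1) := h4
      _ ≤ ℓsq n := h7
  have hvv2 : Tendsto (fun n => ⟪v n, M (v n)⟫) atTop (𝓝 0) := by
    rw [← tendsto_add_atTop_iff_nat 1]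
    apply squeeze_zero (fun n => hnn _) _ (by simpa using hℓ0.div_const (ε^3*β/8))
    intro n
    have h4 : ε^3*β/8 * ⟪v (n+1), M (v (n+1))⟫ ≤ W (n+1) := by
      have h5 := mul_le_mul_of_nonneg_right (hhc_lb (n+1)) (hnn (v (n+1)))
      have h6 := mul_nonneg (hbc_nn (n+1)) (hnn (u (n+1)))
      simp only [hW]
      linarith
    have h7 : W (n+1) ≤ ℓsq n :=
      le_trans (hWdevn n) (mul_le_of_le_one_left (hℓnn n) (hζ1 n))
    rw [le_div_iff₀ hε3β]
    calc ⟪v (n+1), M (v (n+1))⟫ * (ε^3*β/8) = ε^3*β/8 * ⟪v (n+1), M (v (n+1))⟫ := by ring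
      _ ≤ W (n+1) := h4
      _ ≤ ℓsq n := h7
  have hee : Tendsto (fun n => ⟪(p n - x n + (lam n * γ n * β / (2 - lam n * γ n * β)) • u n - (2 * (1 - lam n) / (4 - 2 * lam n - γ n * β)) • v n), M (p n - x n + (lam n * γ n * β / (2 - lam n * γ n * β)) • u n - (2 * (1 - lam n) / (4 - 2 * lam n - γ n * β)) • v n)⟫) atTop (𝓝 0) := by
    apply squeeze_zero (fun n => hnn _) _ (by simpa using hℓ0.div_const (ε^2/2))
    intro n
    have h5 := mul_le_mul_of_nonneg_right (hls_lb n) (hnn (p n - x n + (lam n * γ n * β / (2 - lam n * γ n * β)) • u n - (2 * (1 - lam n) / (4 - 2 * lam n - γ n * β)) • v n))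
    have h6 : ℓsq n = lam n * (4 - 2*lam n - γ n * β)/2 * ⟪(p n - x n + (lam n * γ n * β / (2 - lam n * γ n * β)) • u n - (2 * (1 - lam n) / (4 - 2 * lam n - γ n * β)) • v n), M (p n - x n + (lam n * γ n * β / (2 - lam n * γ n * β)) • u n - (2 * (1 - lam n) / (4 - 2 * lam n - γ n * β)) • v n)⟫ := by
      rw [hℓ n, hmsq]
    rw [le_div_iff₀ (by positivity : (0:ℝ) < ε^2/2)]
    linarith
  have hsqrt0 : ∀ {f : ℕ → ℝ}, Tendsto f atTop (𝓝 0) →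
      Tendsto (fun n => Real.sqrt (f n)) atTop (𝓝 0) := by
    intro f hf
    simpa using hf.sqrt
  have hmu : Tendsto (fun n => mnorm M (u n)) atTop (𝓝 0) := hsqrt0 huu2
  have hmv : Tendsto (fun n => mnorm M (v n)) atTop (𝓝 0) := hsqrt0 hvv2
  have hmE : Tendsto (fun n => mnorm M (p n - x n + (lam n * γ n * β / (2 - lam n * γ n * β)) • u n - (2 * (1 - lam n) / (4 - 2 * lam n - γ n * β)) • v n)) atTop (𝓝 0) := hsqrt0 hee
  have hmd : Tendsto (fun n => mnorm M (p n - x n)) atTop (𝓝 0) := by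
    apply squeeze_zero (fun n => hmnn _) _
      (by simpa using (hmE.add ((hmu.const_mul (4/(ε^2*β))).add (hmv.const_mul (2/ε)))))
    intro n
    have hdec : p n - x n = (p n - x n + (lam n * γ n * β / (2 - lam n * γ n * β)) • u n - (2 * (1 - lam n) / (4 - 2 * lam n - γ n * β)) • v n)
        + (-(lam n * γ n * β / (2 - lam n * γ n * β)))•u n
        + (2 * (1 - lam n) / (4 - 2 * lam n - γ n * β))•v n := by module
    have h1 : mnorm M (p n - x n) ≤ mnorm M (p n - x n + (lam n * γ n * β / (2 - lam n * γ n * β)) • u n - (2 * (1 - lam n) / (4 - 2 * lam n - γ n * β)) • v n)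
        + mnorm M ((-(lam n * γ n * β / (2 - lam n * γ n * β)))•u n)
        + mnorm M ((2 * (1 - lam n) / (4 - 2 * lam n - γ n * β))•v n) := by
      conv_lhs => rw [hdec]
      exact le_trans (htri _ _) (add_le_add_left (htri _ _) _)
    have h2 : mnorm M ((-(lam n * γ n * β / (2 - lam n * γ n * β)))•u n)
        ≤ (4/(ε^2*β)) * mnorm M (u n) := by
      rw [hmsmul, abs_neg, abs_of_nonneg (hbc_nn n)]
      exact mul_le_mul_of_nonneg_right (hbc_ub n) (hmnn _)
    have h3 : mnorm M ((2 * (1 - lam n) / (4 - 2 * lam n - γ n * β))•v n)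
        ≤ (2/ε) * mnorm M (v n) := by
      rw [hmsmul]
      exact mul_le_mul_of_nonneg_right (hcc_abs n) (hmnn _)
    linarith
  have hmpz : Tendsto (fun n => mnorm M (p n - z n)) atTop (𝓝 0) := by
    apply squeeze_zero (fun n => hmnn _) _
      (by simpa using (hmd.add ((hmu.const_mul (8/(ε^2*β))).add hmv)))
    intro n
    have hdec : p n - z n = (p n - x n)
        + (-((1 - lam n) * γ n * β / (2 - lam n * γ n * β)))•u n
        + (-1:ℝ)•v n := by
      rw [hz n]; module
    have h1 : mnorm M (p n - z n) ≤ mnorm M (p n - x n)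
        + mnorm M ((-((1 - lam n) * γ n * β / (2 - lam n * γ n * β)))•u n)
        + mnorm M ((-1:ℝ)•v n) := by
      conv_lhs => rw [hdec]
      exact le_trans (htri _ _) (add_le_add_left (htri _ _) _)
    have h2 : mnorm M ((-((1 - lam n) * γ n * β / (2 - lam n * γ n * β)))•u n)
        ≤ (8/(ε^2*β)) * mnorm M (u n) := by
      rw [hmsmul, abs_neg]
      exact mul_le_mul_of_nonneg_right (hac_abs n) (hmnn _)
    have h3 : mnorm M ((-1:ℝ)•v n) = mnorm M (v n) := by
      rw [hmsmul]; simp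
    linarith
  have hmpy : Tendsto (fun n => mnorm M (p n - y n)) atTop (𝓝 0) := by
    apply squeeze_zero (fun n => hmnn _) _ (by simpa using (hmd.add hmu))
    intro n
    have hdec : p n - y n = (p n - x n) + (-1:ℝ)•u n := by
      rw [hy n]; module
    have h1 : mnorm M (p n - y n) ≤ mnorm M (p n - x n) + mnorm M ((-1:ℝ)•u n) := by
      conv_lhs => rw [hdec]
      exact htri _ _
    have h3 : mnorm M ((-1:ℝ)•u n) = mnorm M (u n) := by
      rw [hmsmul]; simp
    linarith
  have hto0 : ∀ (f : ℕ → H), Tendsto (fun n => mnorm M (f n)) atTop (𝓝 0) →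
      Tendsto f atTop (𝓝 0) := by
    intro f hf
    apply squeeze_zero_norm (fun n => hnorm_le (f n))
    simpa using hf.div_const (Real.sqrt c)
  have hnd : Tendsto (fun n => p n - x n) atTop (𝓝 0) := hto0 _ hmd
  have hnu : Tendsto u atTop (𝓝 0) := hto0 _ hmu
  have hnpz : Tendsto (fun n => p n - z n) atTop (𝓝 0) := hto0 _ hmpz
  -- boundedness of the iterates
  have hDle : ∀ n, ⟪x n - xs, M (x n - xs)⟫ ≤ ⟪x 0 - xs, M (x 0 - xs)⟫ := by
    intro n
    have anti := antitone_nat_of_succ_le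
      (f := fun n => ⟪x n - xs, M (x n - xs)⟫ + W n) (hVanti xs hxs)
    have h1 := anti (Nat.zero_le n)
    have h2 := hWnn n
    simp only [hW0, add_zero] at h1
    linarith
  have hxB : ∀ n, ‖x n‖ ≤ Real.sqrt (⟪x 0 - xs, M (x 0 - xs)⟫) / Real.sqrt c + ‖xs‖ := by
    intro n
    have h3 : mnorm M (x n - xs) ≤ Real.sqrt (⟪x 0 - xs, M (x 0 - xs)⟫) :=
      Real.sqrt_le_sqrt (hDle n)
    have h4 : (0:ℝ) < Real.sqrt c := Real.sqrt_pos.mpr hc0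
    have h1 : ‖x n - xs‖ ≤ Real.sqrt (⟪x 0 - xs, M (x 0 - xs)⟫)/Real.sqrt c := by
      calc ‖x n - xs‖ ≤ mnorm M (x n - xs)/Real.sqrt c := hnorm_le _
        _ ≤ _ := by gcongr
    calc ‖x n‖ = ‖(x n - xs) + xs‖ := by rw [sub_add_cancel]
      _ ≤ ‖x n - xs‖ + ‖xs‖ := norm_add_le _ _
      _ ≤ _ := by linarith
  have hpxsB : ∀ n, mnorm M (p n - xs) ≤ Real.sqrt (⟪x 0 - xs, M (x 0 - xs)⟫)
      + mnorm M (p n - x n) := by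
    intro n
    have hdec : p n - xs = (x n - xs) + (p n - x n) := by abel
    have h3 : mnorm M (x n - xs) ≤ Real.sqrt (⟪x 0 - xs, M (x 0 - xs)⟫) :=
      Real.sqrt_le_sqrt (hDle n)
    calc mnorm M (p n - xs) = mnorm M ((x n - xs) + (p n - x n)) := by rw [← hdec]
      _ ≤ mnorm M (x n - xs) + mnorm M (p n - x n) := htri _ _
      _ ≤ _ := by linarith
  -- the gradient-type term tends to zero
  have ht0 : Tendsto (fun n => mnorm Minv (C (y n) - C xs)) atTop (𝓝 0) := by
    have hk0 : Tendsto (fun n => (1/ε) * mnorm M (p n - z n)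
        * (Real.sqrt (⟪x 0 - xs, M (x 0 - xs)⟫) + mnorm M (p n - x n))) atTop (𝓝 0) := by
      have := (hmpz.const_mul (1/ε)).mul
        ((tendsto_const_nhds : Tendsto (fun _ : ℕ => Real.sqrt (⟪x 0 - xs, M (x 0 - xs)⟫)) atTop _).add hmd)
      simpa using this
    have ha1 := hmpy.mul_const β
    rw [zero_mul] at ha1
    have ha2 := hk0.mul_const β
    rw [zero_mul] at ha2
    have ha4 := ha1.add (hsqrt0 ha2)
    rw [add_zero] at ha4
    apply squeeze_zero (fun n => Real.sqrt_nonneg _) _ ha4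
    intro n
    have hk := hKEY xs hxs n
    have htn : 0 ≤ mnorm Minv (C (y n) - C xs) := Real.sqrt_nonneg _
    -- bound the right side of hKEY
    have hX : (γ n)⁻¹ * ⟪z n - p n, M (p n - xs)⟫
        ≤ (1/ε) * mnorm M (p n - z n)
          * (Real.sqrt (⟪x 0 - xs, M (x 0 - xs)⟫) + mnorm M (p n - x n)) := by
      have hzn : mnorm M (z n - p n) = mnorm M (p n - z n) := by
        rw [show z n - p n = -(p n - z n) by abel, hmneg]
      have h1 : ⟪z n - p n, M (p n - xs)⟫ ≤ mnorm M (p n - z n) * mnorm M (p n - xs) := by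
        have := (abs_le.mp (hCS (z n - p n) (p n - xs))).2
        rw [hzn] at this
        exact this
      have h2 : (γ n)⁻¹ ≤ 1/ε := by
        rw [one_div]
        exact inv_anti₀ hε0 (hγ n).1
      have h3 : 0 ≤ mnorm M (p n - z n) * mnorm M (p n - xs) :=
        mul_nonneg (hmnn _) (hmnn _)
      have h4 : (γ n)⁻¹ * ⟪z n - p n, M (p n - xs)⟫
          ≤ (1/ε) * (mnorm M (p n - z n) * mnorm M (p n - xs)) := by
        calc (γ n)⁻¹ * ⟪z n - p n, M (p n - xs)⟫
            ≤ (γ n)⁻¹ * (mnorm M (p n - z n) * mnorm M (p n - xs)) :=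
              mul_le_mul_of_nonneg_left h1 (le_of_lt (inv_pos.mpr (hγpos n)))
          _ ≤ (1/ε) * (mnorm M (p n - z n) * mnorm M (p n - xs)) :=
              mul_le_mul_of_nonneg_right h2 h3
      have h5 := hpxsB n
      have h6 : (1/ε) * (mnorm M (p n - z n) * mnorm M (p n - xs))
          ≤ (1/ε) * mnorm M (p n - z n)
            * (Real.sqrt (⟪x 0 - xs, M (x 0 - xs)⟫) + mnorm M (p n - x n)) := by
        have h7 : mnorm M (p n - z n) * mnorm M (p n - xs)
            ≤ mnorm M (p n - z n)
              * (Real.sqrt (⟪x 0 - xs, M (x 0 - xs)⟫) + mnorm M (p n - x n)) :=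
          mul_le_mul_of_nonneg_left h5 (hmnn _)
        calc (1/ε) * (mnorm M (p n - z n) * mnorm M (p n - xs))
            ≤ (1/ε) * (mnorm M (p n - z n)
              * (Real.sqrt (⟪x 0 - xs, M (x 0 - xs)⟫) + mnorm M (p n - x n))) :=
              mul_le_mul_of_nonneg_left h7 (by positivity)
          _ = _ := by ring
      linarith
    -- quadratic bound
    have h8 : mnorm Minv (C (y n) - C xs)^2/β
        ≤ mnorm Minv (C (y n) - C xs) * mnorm M (p n - y n)
          + (1/ε) * mnorm M (p n - z n)
            * (Real.sqrt (⟪x 0 - xs, M (x 0 - xs)⟫) + mnorm M (p n - x n)) := by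
      have : (1/β) * mnorm Minv (C (y n) - C xs)^2
          = mnorm Minv (C (y n) - C xs)^2/β := by ring
      linarith [hk, hX]
    have h9 := (div_le_iff₀ hβ).mp h8
    have hknn : 0 ≤ (1/ε) * mnorm M (p n - z n)
        * (Real.sqrt (⟪x 0 - xs, M (x 0 - xs)⟫) + mnorm M (p n - x n)) := by
      have := Real.sqrt_nonneg (⟪x 0 - xs, M (x 0 - xs)⟫)
      have := hmnn (p n - z n)
      have := hmnn (p n - x n)
      positivity
    have h10 : mnorm Minv (C (y n) - C xs)^2
        ≤ (mnorm M (p n - y n) * β) * mnorm Minv (C (y n) - C xs)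
          + ((1/ε) * mnorm M (p n - z n)
            * (Real.sqrt (⟪x 0 - xs, M (x 0 - xs)⟫) + mnorm M (p n - x n))) * β := by
      nlinarith [h9]
    exact aux_sq_le htn (mul_nonneg (hmnn _) (le_of_lt hβ))
      (mul_nonneg hknn (le_of_lt hβ)) h10
  have hCyx : Tendsto (fun n => C (y n)) atTop (𝓝 (C xs)) := by
    rw [tendsto_iff_norm_sub_tendsto_zero]
    have hb := ht0.const_mul ((‖M‖+1)/Real.sqrt c)
    rw [mul_zero] at hb
    apply squeeze_zero_norm (fun n => ?_) hb
    calc ‖‖C (y n) - C xs‖‖ = ‖C (y n) - C xs‖ := norm_norm _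
      _ ≤ ((‖M‖+1)/Real.sqrt c) * mnorm Minv (C (y n) - C xs) := hnormInv_le _
  -- residual converges to -C xs
  have hrr : Tendsto (fun n => (γ n)⁻¹ • (M (z n) - M (p n)) - C (y n)) atTop (𝓝 (-C xs)) := by
    rw [tendsto_iff_norm_sub_tendsto_zero]
    have hnpzn : Tendsto (fun n => ‖p n - z n‖) atTop (𝓝 0) := by
      simpa using hnpz.norm
    have hb1 : Tendsto (fun n => (1/ε) * (‖M‖ * ‖p n - z n‖)) atTop (𝓝 0) := by
      have := (hnpzn.const_mul ‖M‖).const_mul (1/ε)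
      simpa using this
    have hb2 : Tendsto (fun n => ‖C (y n) - C xs‖) atTop (𝓝 0) :=
      tendsto_iff_norm_sub_tendsto_zero.mp hCyx
    have hb3 := hb1.add hb2
    rw [add_zero] at hb3
    apply squeeze_zero_norm (fun n => ?_) hb3
    have hsplit : (γ n)⁻¹ • (M (z n) - M (p n)) - C (y n) - -C xs
        = (γ n)⁻¹ • (M (z n) - M (p n)) - (C (y n) - C xs) := by abel
    rw [hsplit]
    have e1 : ‖(γ n)⁻¹ • (M (z n) - M (p n))‖ = (γ n)⁻¹ * ‖M (z n - p n)‖ := by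
      rw [norm_smul, Real.norm_eq_abs, abs_of_pos (inv_pos.mpr (hγpos n)), map_sub]
    have e3 : ‖M (z n - p n)‖ ≤ ‖M‖ * ‖z n - p n‖ := M.le_opNorm _
    have e4 : ‖z n - p n‖ = ‖p n - z n‖ := norm_sub_rev _ _
    have e5 : (γ n)⁻¹ ≤ 1/ε := by
      rw [one_div]
      exact inv_anti₀ hε0 (hγ n).1
    have e6 : ‖(γ n)⁻¹ • (M (z n) - M (p n))‖ ≤ (1/ε) * (‖M‖ * ‖p n - z n‖) := by
      rw [e1]
      calc (γ n)⁻¹ * ‖M (z n - p n)‖ ≤ (γ n)⁻¹ * (‖M‖ * ‖p n - z n‖) := by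
            apply mul_le_mul_of_nonneg_left _ (le_of_lt (inv_pos.mpr (hγpos n)))
            rw [← e4]
            exact e3
        _ ≤ (1/ε) * (‖M‖ * ‖p n - z n‖) :=
            mul_le_mul_of_nonneg_right e5 (by positivity)
    calc ‖‖(γ n)⁻¹ • (M (z n) - M (p n)) - (C (y n) - C xs)‖‖
        = ‖(γ n)⁻¹ • (M (z n) - M (p n)) - (C (y n) - C xs)‖ := norm_norm _
      _ ≤ ‖(γ n)⁻¹ • (M (z n) - M (p n))‖ + ‖C (y n) - C xs‖ := norm_sub_le _ _
      _ ≤ (1/ε) * (‖M‖ * ‖p n - z n‖) + ‖C (y n) - C xs‖ := by linarith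
  -- uniform bounds on p and y
  have hndn : Tendsto (fun n => ‖p n - x n‖) atTop (𝓝 0) := by simpa using hnd.norm
  have hnun : Tendsto (fun n => ‖u n‖) atTop (𝓝 0) := by simpa using hnu.norm
  obtain ⟨Bd, hBd⟩ := hndn.bddAbove_range
  obtain ⟨Bu, hBu⟩ := hnun.bddAbove_range
  have hpB : ∀ n, ‖p n‖ ≤ (Real.sqrt (⟪x 0 - xs, M (x 0 - xs)⟫) / Real.sqrt c + ‖xs‖) + Bd := by
    intro n
    have h1 : ‖p n - x n‖ ≤ Bd := hBd ⟨n, rfl⟩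
    calc ‖p n‖ = ‖x n + (p n - x n)‖ := by congr 1; abel
      _ ≤ ‖x n‖ + ‖p n - x n‖ := norm_add_le _ _
      _ ≤ _ := add_le_add (hxB n) h1
  have hyB : ∀ n, ‖y n‖ ≤ (Real.sqrt (⟪x 0 - xs, M (x 0 - xs)⟫) / Real.sqrt c + ‖xs‖) + Bu := by
    intro n
    have h1 : ‖u n‖ ≤ Bu := hBu ⟨n, rfl⟩
    calc ‖y n‖ = ‖x n + u n‖ := by rw [hy n]
      _ ≤ ‖x n‖ + ‖u n‖ := norm_add_le _ _
      _ ≤ _ := add_le_add (hxB n) h1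
  -- demiclosedness along weakly convergent subsequences
  have hdemi : ∀ σ : ℕ → ℕ, StrictMono σ → ∀ wb : H,
      (∀ w : H, Tendsto (fun k => ⟪x (σ k), w⟫) atTop (𝓝 ⟪wb, w⟫)) → -C wb ∈ A wb := by
    intro σ hσ wb hweak
    have hσt : Tendsto σ atTop atTop := hσ.tendsto_atTop
    have hpweak : ∀ w : H, Tendsto (fun k => ⟪p (σ k), w⟫) atTop (𝓝 ⟪wb, w⟫) := by
      intro w
      have hc2 : Tendsto (fun k => ‖p (σ k) - x (σ k)‖ * ‖w‖) atTop (𝓝 0) := by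
        simpa [Function.comp] using (hndn.comp hσt).mul_const ‖w‖
      have h2 : Tendsto (fun k => ⟪p (σ k) - x (σ k), w⟫) atTop (𝓝 0) := by
        apply squeeze_zero_norm (fun k => ?_) hc2
        calc ‖⟪p (σ k) - x (σ k), w⟫‖ = |⟪p (σ k) - x (σ k), w⟫| := rfl
          _ ≤ ‖p (σ k) - x (σ k)‖ * ‖w‖ := abs_real_inner_le_norm _ _
      have h4 := (hweak w).add h2
      rw [add_zero] at h4
      refine h4.congr (fun k => ?_)
      rw [← inner_add_left]
      congr 1
      abel
    have hyweak : ∀ w : H, Tendsto (fun k => ⟪y (σ k), w⟫) atTop (𝓝 ⟪wb, w⟫) := by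
      intro w
      have hc2 : Tendsto (fun k => ‖u (σ k)‖ * ‖w‖) atTop (𝓝 0) := by
        simpa [Function.comp] using (hnun.comp hσt).mul_const ‖w‖
      have h2 : Tendsto (fun k => ⟪u (σ k), w⟫) atTop (𝓝 0) := by
        apply squeeze_zero_norm (fun k => ?_) hc2
        calc ‖⟪u (σ k), w⟫‖ = |⟪u (σ k), w⟫| := rfl
          _ ≤ ‖u (σ k)‖ * ‖w‖ := abs_real_inner_le_norm _ _
      have h4 := (hweak w).add h2
      rw [add_zero] at h4
      refine h4.congr (fun k => ?_)
      rw [hy (σ k), inner_add_left]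
    have hCy_comp : Tendsto (fun k => C (y (σ k))) atTop (𝓝 (C xs)) := by
      simpa [Function.comp_def] using hCyx.comp hσt
    have hCnorm : Tendsto (fun k => ‖C (y (σ k)) - C xs‖) atTop (𝓝 0) :=
      tendsto_iff_norm_sub_tendsto_zero.mp hCy_comp
    have hContMinv : Continuous (fun a : H => mnorm Minv a) :=
      Real.continuous_sqrt.comp (continuous_id.inner Minv.continuous)
    have h2 : C wb = C xs := by
      have hvec : Tendsto (fun k => C (y (σ k)) - C wb) atTop (𝓝 (C xs - C wb)) :=
        hCy_comp.sub tendsto_const_nhds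
      have hmc : Tendsto (fun k => mnorm Minv (C (y (σ k)) - C wb)) atTop
          (𝓝 (mnorm Minv (C xs - C wb))) := by
        simpa [Function.comp_def] using (hContMinv.tendsto (C xs - C wb)).comp hvec
      have hLHS := (hmc.pow 2).const_mul (1/β)
      have hRHS : Tendsto (fun k => ⟪C (y (σ k)) - C wb, y (σ k) - wb⟫) atTop (𝓝 0) := by
        have hfst : Tendsto (fun k => ⟪C (y (σ k)) - C xs, y (σ k) - wb⟫) atTop (𝓝 0) := by
          have hcb : Tendsto (fun k => ‖C (y (σ k)) - C xs‖
              * (((Real.sqrt (⟪x 0 - xs, M (x 0 - xs)⟫) / Real.sqrt c + ‖xs‖) + Bu) + ‖wb‖))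
              atTop (𝓝 0) := by
            simpa using hCnorm.mul_const _
          apply squeeze_zero_norm (fun k => ?_) hcb
          have hyb : ‖y (σ k) - wb‖
              ≤ ((Real.sqrt (⟪x 0 - xs, M (x 0 - xs)⟫) / Real.sqrt c + ‖xs‖) + Bu) + ‖wb‖ := by
            calc ‖y (σ k) - wb‖ ≤ ‖y (σ k)‖ + ‖wb‖ := norm_sub_le _ _
              _ ≤ _ := add_le_add_left (hyB (σ k)) _
          calc ‖⟪C (y (σ k)) - C xs, y (σ k) - wb⟫‖
              = |⟪C (y (σ k)) - C xs, y (σ k) - wb⟫| := rfl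
            _ ≤ ‖C (y (σ k)) - C xs‖ * ‖y (σ k) - wb‖ := abs_real_inner_le_norm _ _
            _ ≤ _ := mul_le_mul_of_nonneg_left hyb (norm_nonneg _)
        have hsnd : Tendsto (fun k => ⟪C xs - C wb, y (σ k) - wb⟫) atTop (𝓝 0) := by
          have h5 := (hyweak (C xs - C wb)).sub_const (⟪wb, C xs - C wb⟫)
          rw [sub_self] at h5
          have heq9 : ∀ k : ℕ, ⟪y (σ k), C xs - C wb⟫ - ⟪wb, C xs - C wb⟫
              = ⟪C xs - C wb, y (σ k) - wb⟫ := by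
            intro k
            rw [real_inner_comm (y (σ k) - wb) (C xs - C wb), inner_sub_left]
          exact h5.congr heq9
        have h6 := hfst.add hsnd
        rw [add_zero] at h6
        refine h6.congr (fun k => ?_)
        rw [← inner_add_left]
        congr 1
        abel
      have hle := le_of_tendsto_of_tendsto' hLHS hRHS (fun k => hC (y (σ k)) wb)
      have h8 : mnorm Minv (C xs - C wb)^2 ≤ 0 := by
        nlinarith [hle, one_div_pos.mpr hβ]
      have h10 : mnorm Minv (C xs - C wb) = 0 := by
        have := Real.sqrt_nonneg (⟪C xs - C wb, Minv (C xs - C wb)⟫)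
        nlinarith [h8]
      have h9 := hnormInv_le (C xs - C wb)
      rw [h10, mul_zero] at h9
      have h11 : C xs - C wb = 0 := norm_le_zero_iff.mp h9
      have := sub_eq_zero.mp h11
      exact this.symm
    have h1 : -C xs ∈ A wb := by
      apply hAmax
      intro b vb hvb
      have hnonneg : ∀ k, (0:ℝ)
          ≤ ⟪((γ (σ k))⁻¹ • (M (z (σ k)) - M (p (σ k))) - C (y (σ k))) - vb, p (σ k) - b⟫ :=
        fun k => hAmono _ _ _ _ (hres (σ k)) hvb
      have hnres : Tendsto (fun k =>
          ‖((γ (σ k))⁻¹ • (M (z (σ k)) - M (p (σ k))) - C (y (σ k))) - -C xs‖) atTop (𝓝 0) := by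
        simpa [Function.comp] using tendsto_iff_norm_sub_tendsto_zero.mp (hrr.comp hσt)
      have hfirst : Tendsto (fun k =>
          ⟪((γ (σ k))⁻¹ • (M (z (σ k)) - M (p (σ k))) - C (y (σ k))) - -C xs, p (σ k) - b⟫)
          atTop (𝓝 0) := by
        have hcb : Tendsto (fun k =>
            ‖((γ (σ k))⁻¹ • (M (z (σ k)) - M (p (σ k))) - C (y (σ k))) - -C xs‖
            * (((Real.sqrt (⟪x 0 - xs, M (x 0 - xs)⟫) / Real.sqrt c + ‖xs‖) + Bd) + ‖b‖))
            atTop (𝓝 0) := by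
          simpa using hnres.mul_const _
        apply squeeze_zero_norm (fun k => ?_) hcb
        have hpb : ‖p (σ k) - b‖
            ≤ ((Real.sqrt (⟪x 0 - xs, M (x 0 - xs)⟫) / Real.sqrt c + ‖xs‖) + Bd) + ‖b‖ := by
          calc ‖p (σ k) - b‖ ≤ ‖p (σ k)‖ + ‖b‖ := norm_sub_le _ _
            _ ≤ _ := add_le_add_left (hpB (σ k)) _
        calc ‖⟪((γ (σ k))⁻¹ • (M (z (σ k)) - M (p (σ k))) - C (y (σ k))) - -C xs, p (σ k) - b⟫‖
            = |⟪((γ (σ k))⁻¹ • (M (z (σ k)) - M (p (σ k))) - C (y (σ k))) - -C xs, p (σ k) - b⟫| := rfl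
          _ ≤ ‖((γ (σ k))⁻¹ • (M (z (σ k)) - M (p (σ k))) - C (y (σ k))) - -C xs‖ * ‖p (σ k) - b‖ :=
              abs_real_inner_le_norm _ _
          _ ≤ _ := mul_le_mul_of_nonneg_left hpb (norm_nonneg _)
      have hsecond : Tendsto (fun k => ⟪-C xs - vb, p (σ k) - b⟫) atTop
          (𝓝 ⟪-C xs - vb, wb - b⟫) := by
        have h5 := (hpweak (-C xs - vb)).sub_const (⟪-C xs - vb, b⟫)
        have he : ⟪-C xs - vb, wb - b⟫ = ⟪wb, -C xs - vb⟫ - ⟪-C xs - vb, b⟫ := by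
          have e1 : ⟪-C xs - vb, wb - b⟫ = ⟪-C xs - vb, wb⟫ - ⟪-C xs - vb, b⟫ := by
            rw [inner_sub_right]
          rw [e1, real_inner_comm wb (-C xs - vb)]
        rw [he]
        have heq9 : ∀ k : ℕ, ⟪p (σ k), -C xs - vb⟫ - ⟪-C xs - vb, b⟫
            = ⟪-C xs - vb, p (σ k) - b⟫ := by
          intro k
          have e1 : ⟪-C xs - vb, p (σ k) - b⟫
              = ⟪-C xs - vb, p (σ k)⟫ - ⟪-C xs - vb, b⟫ := by
            rw [inner_sub_right]
          rw [e1, real_inner_comm (p (σ k)) (-C xs - vb)]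
        exact h5.congr heq9
      have hsum := hfirst.add hsecond
      rw [zero_add] at hsum
      have hfun : ∀ k : ℕ,
          (⟪((γ (σ k))⁻¹ • (M (z (σ k)) - M (p (σ k))) - C (y (σ k))) - -C xs, p (σ k) - b⟫
            + ⟪-C xs - vb, p (σ k) - b⟫)
          = ⟪((γ (σ k))⁻¹ • (M (z (σ k)) - M (p (σ k))) - C (y (σ k))) - vb, p (σ k) - b⟫ := by
        intro k
        rw [← inner_add_left]
        congr 1
        abel
      exact ge_of_tendsto' (hsum.congr hfun) hnonneg
    rw [h2]
    exact h1
  -- W tends to zero, hence the distances converge for every zero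
  have hWten : Tendsto W atTop (𝓝 0) := by
    have hT : Tendsto (fun n => (4/(ε^2*β)) * ⟪u n, M (u n)⟫ + (4/ε) * ⟪v n, M (v n)⟫)
        atTop (𝓝 0) := by
      have := (huu2.const_mul (4/(ε^2*β))).add (hvv2.const_mul (4/ε))
      simpa using this
    apply squeeze_zero hWnn _ hT
    intro n
    simp only [hW]
    have h1 := mul_le_mul_of_nonneg_right (hbc_ub n) (hnn (u n))
    have h2 := mul_le_mul_of_nonneg_right (hhc_ub n) (hnn (v n))
    linarith
  have hlimD : ∀ q, -C q ∈ A q →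
      ∃ Lq, Tendsto (fun n => ⟪x n - q, M (x n - q)⟫) atTop (𝓝 Lq) := by
    intro q hq
    obtain ⟨Lq, hLq⟩ := hVtend q hq
    refine ⟨Lq, ?_⟩
    have h1 := hLq.sub hWten
    rw [sub_zero] at h1
    exact h1.congr (fun n => by ring)
  -- uniqueness of weak subsequential limits (Opial)
  have huniq : ∀ (w1 w2 : H), -C w1 ∈ A w1 → -C w2 ∈ A w2 →
      ∀ (σ1 σ2 : ℕ → ℕ), StrictMono σ1 → StrictMono σ2 →
      (∀ w : H, Tendsto (fun k => ⟪x (σ1 k), w⟫) atTop (𝓝 ⟪w1, w⟫)) →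
      (∀ w : H, Tendsto (fun k => ⟪x (σ2 k), w⟫) atTop (𝓝 ⟪w2, w⟫)) → w1 = w2 := by
    intro w1 w2 hq1 hq2 σ1 σ2 hσ1 hσ2 hw1 hw2
    obtain ⟨L1, hL1⟩ := hlimD w1 hq1
    obtain ⟨L2, hL2⟩ := hlimD w2 hq2
    have hG : Tendsto (fun n => ⟪x n, M (w1 - w2)⟫) atTop
        (𝓝 ((L2 - L1 + ⟪w1, M w1⟫ - ⟪w2, M w2⟫)/2)) := by
      have hexp : ∀ n : ℕ, ⟪x n, M (w1 - w2)⟫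
          = ((⟪x n - w2, M (x n - w2)⟫ - ⟪x n - w1, M (x n - w1)⟫)
            + ⟪w1, M w1⟫ - ⟪w2, M w2⟫)/2 := by
        intro n
        have e1 : ⟪x n - w1, M (x n - w1)⟫
            = ⟪x n, M (x n)⟫ - 2*⟪x n, M w1⟫ + ⟪w1, M w1⟫ := by
          simp only [map_sub, inner_sub_left, inner_sub_right]
          rw [hsymM w1 (x n)]
          ring
        have e2 : ⟪x n - w2, M (x n - w2)⟫
            = ⟪x n, M (x n)⟫ - 2*⟪x n, M w2⟫ + ⟪w2, M w2⟫ := by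
          simp only [map_sub, inner_sub_left, inner_sub_right]
          rw [hsymM w2 (x n)]
          ring
        have e3 : ⟪x n, M (w1 - w2)⟫ = ⟪x n, M w1⟫ - ⟪x n, M w2⟫ := by
          rw [map_sub, inner_sub_right]
        linarith [e1, e2, e3]
      have hT := (((hL2.sub hL1).add_const (⟪w1, M w1⟫)).sub_const (⟪w2, M w2⟫)).div_const 2
      exact hT.congr (fun n => (hexp n).symm)
    have ha1 : ⟪w1, M (w1 - w2)⟫ = (L2 - L1 + ⟪w1, M w1⟫ - ⟪w2, M w2⟫)/2 :=
      tendsto_nhds_unique (hw1 (M (w1 - w2))) (hG.comp hσ1.tendsto_atTop)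
    have ha2 : ⟪w2, M (w1 - w2)⟫ = (L2 - L1 + ⟪w1, M w1⟫ - ⟪w2, M w2⟫)/2 :=
      tendsto_nhds_unique (hw2 (M (w1 - w2))) (hG.comp hσ2.tendsto_atTop)
    have hz2 : ⟪w1 - w2, M (w1 - w2)⟫ = 0 := by
      rw [inner_sub_left]
      linarith [ha1, ha2]
    have h12 := hzero_of (w1 - w2) (le_of_eq hz2)
    exact sub_eq_zero.mp h12
  -- conclusion
  obtain ⟨φ, hφ, xb, hxb⟩ := exists_weak_subseq x _ hxB
  have hzb : -C xb ∈ A xb := hdemi φ hφ xb hxb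
  refine ⟨xb, hzb, ?_⟩
  intro w
  apply tendsto_of_subseq_tendsto
  intro ns hns
  obtain ⟨φ0, hφ0, hnsφ0⟩ := strictMono_subseq_of_tendsto_atTop hns
  obtain ⟨ψ, hψ, wb, hwb⟩ := exists_weak_subseq (fun k => x (ns (φ0 k))) _ (fun k => hxB _)
  have hσ : StrictMono (fun k => ns (φ0 (ψ k))) := hnsφ0.comp hψ
  have hwweak : ∀ w' : H, Tendsto (fun k => ⟪x (ns (φ0 (ψ k))), w'⟫) atTop (𝓝 ⟪wb, w'⟫) := hwb
  have hzb2 : -C wb ∈ A wb := hdemi _ hσ wb hwweak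
  have heq : wb = xb := huniq wb xb hzb2 hzb _ φ hσ hφ hwweak hxb
  refine ⟨fun k => φ0 (ψ k), ?_⟩
  rw [← heq]
  exact hwweak w
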